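/- Let A ⊆ ℕ\{1\}. If L(A) ∪ {0} contains a dense infinite-dimensional linear subspace of ℓ∞, then A ∩ (A − 1) is infinite, i.e., there are infinitely many a ∈ A with a + 1 ∈ A. -/

import Mathlib

open Filter Topology Set ENNReal

noncomputable section

/-- The set of accumulation points of a real sequence: limits of convergent subsequences. -/
def accPts (x : ℕ → ℝ) : Set ℝ :=
  {a | ∃ φ : ℕ → ℕ, StrictMono φ ∧ Tendsto (fun k => x (φ k)) atTop (𝓝 a)}


/-- The space ℓ∞ of bounded real sequences. -/
abbrev Linf : Type := ↥(lp (fun _ : ℕ => ℝ) ∞)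

/-- Accumulation points of an element of ℓ∞. -/
def accPtsL (z : Linf) : Set ℝ := accPts (fun n => z n)


set_option maxHeartbeats 1000000
namespace SuccAux


/-- joint accumulation points of a pair of sequences -/
def acc2 (x y : ℕ → ℝ) : Set (ℝ × ℝ) :=
  {p | ∃ φ : ℕ → ℕ, StrictMono φ ∧ Tendsto (fun k => (x (φ k), y (φ k))) atTop (𝓝 p)}

lemma acc2_fst {x y : ℕ → ℝ} {p : ℝ × ℝ} (hp : p ∈ acc2 x y) : p.1 ∈ accPts x := by
  obtain ⟨φ, hφ, hlim⟩ := hp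
  exact ⟨φ, hφ, ((continuous_fst.tendsto p).comp hlim)⟩

lemma acc2_snd {x y : ℕ → ℝ} {p : ℝ × ℝ} (hp : p ∈ acc2 x y) : p.2 ∈ accPts y := by
  obtain ⟨φ, hφ, hlim⟩ := hp
  exact ⟨φ, hφ, ((continuous_snd.tendsto p).comp hlim)⟩

lemma acc2_subset_closed {x y : ℕ → ℝ} {K : Set (ℝ × ℝ)} (hK : IsClosed K)
    (h : ∀ n, (x n, y n) ∈ K) : acc2 x y ⊆ K := by
  rintro p ⟨φ, hφ, hlim⟩
  exact hK.mem_of_tendsto hlim (Eventually.of_forall fun k => h (φ k))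

/-- Bolzano-Weierstrass: extract a joint accumulation point along a given subsequence. -/
lemma exists_acc2_along {x y : ℕ → ℝ} {C : ℝ} (hx : ∀ n, |x n| ≤ C) (hy : ∀ n, |y n| ≤ C)
    (φ : ℕ → ℕ) (hφ : StrictMono φ) :
    ∃ p : ℝ × ℝ, ∃ ψ : ℕ → ℕ, StrictMono ψ ∧
      Tendsto (fun k => (x (φ (ψ k)), y (φ (ψ k)))) atTop (𝓝 p) ∧ p ∈ acc2 x y := by
  have hbdd : Bornology.IsBounded ((Metric.closedBall (0:ℝ) C) ×ˢ (Metric.closedBall (0:ℝ) C)) :=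
    (Metric.isBounded_closedBall).prod (Metric.isBounded_closedBall)
  have hmem : ∀ k, ((x (φ k), y (φ k)) : ℝ × ℝ) ∈
      (Metric.closedBall (0:ℝ) C) ×ˢ (Metric.closedBall (0:ℝ) C) := by
    intro k
    constructor
    · simpa [Real.dist_eq] using hx (φ k)
    · simpa [Real.dist_eq] using hy (φ k)
  obtain ⟨p, -, ψ, hψ, hlim⟩ := tendsto_subseq_of_bounded hbdd hmem
  exact ⟨p, ψ, hψ, hlim, ⟨φ ∘ ψ, hφ.comp hψ, hlim⟩⟩

lemma tendsto_pair {x y : ℕ → ℝ} {p : ℝ × ℝ} {φ : ℕ → ℕ}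
    (h : Tendsto (fun k => (x (φ k), y (φ k))) atTop (𝓝 p)) :
    Tendsto (fun k => x (φ k)) atTop (𝓝 p.1) ∧ Tendsto (fun k => y (φ k)) atTop (𝓝 p.2) :=
  ⟨(continuous_fst.tendsto p).comp h, (continuous_snd.tendsto p).comp h⟩

/-- accumulation points of x + t y are exactly images of joint accumulation points. -/
lemma accPts_add_smul {x y : ℕ → ℝ} {C : ℝ} (hx : ∀ n, |x n| ≤ C) (hy : ∀ n, |y n| ≤ C) (t : ℝ) :
    accPts (fun n => x n + t * y n) = (fun p : ℝ × ℝ => p.1 + t * p.2) '' acc2 x y := by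
  ext γ
  constructor
  · rintro ⟨φ, hφ, hlim⟩
    obtain ⟨p, ψ, hψ, hlim2, hmem⟩ := exists_acc2_along hx hy φ hφ
    refine ⟨p, hmem, ?_⟩
    have h1 : Tendsto (fun k => x (φ (ψ k)) + t * y (φ (ψ k))) atTop (𝓝 (p.1 + t * p.2)) :=
      (tendsto_pair hlim2).1.add (((tendsto_pair hlim2).2).const_mul t)
    have h2 : Tendsto (fun k => x (φ (ψ k)) + t * y (φ (ψ k))) atTop (𝓝 γ) :=
      hlim.comp hψ.tendsto_atTop
    exact tendsto_nhds_unique h1 h2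
  · rintro ⟨p, ⟨φ, hφ, hlim⟩, rfl⟩
    exact ⟨φ, hφ, (tendsto_pair hlim).1.add (((tendsto_pair hlim).2).const_mul t)⟩

lemma exists_partner {x y : ℕ → ℝ} {C : ℝ} (hx : ∀ n, |x n| ≤ C) (hy : ∀ n, |y n| ≤ C)
    {α : ℝ} (hα : α ∈ accPts x) : ∃ β, (α, β) ∈ acc2 x y := by
  obtain ⟨φ, hφ, hlim⟩ := hα
  obtain ⟨p, ψ, hψ, hlim2, hmem⟩ := exists_acc2_along hx hy φ hφ
  have : p.1 = α := tendsto_nhds_unique (tendsto_pair hlim2).1 (hlim.comp hψ.tendsto_atTop)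
  have : (α, p.2) = p := by rw [← this]
  exact ⟨p.2, this ▸ hmem⟩



lemma linf_bound (z : Linf) (n : ℕ) : |z n| ≤ ‖z‖ := by
  have := lp.norm_apply_le_norm ENNReal.top_ne_zero z n
  rwa [Real.norm_eq_abs] at this

def mkLinf (f : ℕ → ℝ) (C : ℝ) (h : ∀ n, |f n| ≤ C) : Linf :=
  ⟨f, memℓp_infty ⟨C, by rintro r ⟨n, rfl⟩; simpa using h n⟩⟩

@[simp] lemma mkLinf_apply (f : ℕ → ℝ) (C : ℝ) (h : ∀ n, |f n| ≤ C) (n : ℕ) :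
    (mkLinf f C h) n = f n := rfl

lemma accPts_zero_subset : accPts (fun _ => (0:ℝ)) ⊆ {0} := by
  rintro a ⟨φ, hφ, hlim⟩
  exact tendsto_nhds_unique hlim tendsto_const_nhds

lemma ne_zero_of_two_accPts {z : Linf} {a b : ℝ} (ha : a ∈ accPtsL z) (hb : b ∈ accPtsL z)
    (hab : a ≠ b) : z ≠ 0 := by
  rintro rfl
  have h0 : (fun n => ((0 : Linf) n : ℝ)) = fun _ => (0:ℝ) := by
    funext n; rw [lp.coeFn_zero]; rfl
  rw [accPtsL, h0] at ha hb
  exact hab ((accPts_zero_subset ha).trans (accPts_zero_subset hb).symm)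

lemma dense_approx (M : Submodule ℝ Linf) (hdense : Dense (M : Set Linf)) (u : Linf)
    {ε : ℝ} (hε : 0 < ε) : ∃ w ∈ M, ‖w - u‖ < ε := by
  have := Metric.mem_closure_iff.mp (hdense u) ε hε
  obtain ⟨w, hwM, hw⟩ := this
  exact ⟨w, hwM, by rwa [← dist_eq_norm, dist_comm]⟩

/-- Step 1: elements of M with arbitrarily many accumulation points -/
lemma exists_big (A : Set ℕ) (M : Submodule ℝ Linf) (hdense : Dense (M : Set Linf))
    (hM : ∀ z ∈ M, z ≠ 0 → (accPtsL z).Finite ∧ (accPtsL z).ncard ∈ A) (N : ℕ) :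
    ∃ z : Linf, z ∈ M ∧ z ≠ 0 ∧ (accPtsL z).Finite ∧ (accPtsL z).ncard ∈ A ∧
      N ≤ (accPtsL z).ncard := by
  set K := N + 2 with hK
  set v : ℕ → ℝ := fun n => 3 * ((n % K : ℕ) : ℝ) with hv
  have hvb : ∀ n, |v n| ≤ 3 * K := by
    intro n
    have h2 : (n % K : ℕ) ≤ K := le_of_lt (Nat.mod_lt n (by omega))
    have h3 : ((n % K : ℕ) : ℝ) ≤ (K : ℝ) := by exact_mod_cast h2
    have h1 : (0:ℝ) ≤ 3 * ((n % K : ℕ) : ℝ) := by positivity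
    rw [hv, abs_of_nonneg h1]
    linarith
  set u : Linf := mkLinf v (3 * K) hvb with hu
  obtain ⟨w, hwM, hwu⟩ := dense_approx M hdense u one_pos
  have hptw : ∀ n, |w n - v n| ≤ 1 := by
    intro n
    have h1 : |(w - u) n| ≤ ‖w - u‖ := linf_bound _ n
    have h2 : (w - u) n = w n - v n := by
      rw [lp.coeFn_sub]; simp [hu]
    rw [h2] at h1
    linarith [le_of_lt hwu]
  have hw0 : w ≠ 0 := by
    intro h
    have h1 : v 1 = 3 := by
      rw [hv]
      norm_num [Nat.mod_eq_of_lt (show 1 < K by omega)]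
    have h2 := hptw 1
    rw [h, h1] at h2
    have : ((0 : Linf) 1 : ℝ) = 0 := by rw [lp.coeFn_zero]; rfl
    rw [this] at h2
    rw [abs_le] at h2
    linarith [h2.1]
  obtain ⟨hfin, hncard⟩ := hM w hwM hw0
  refine ⟨w, hwM, hw0, hfin, hncard, ?_⟩
  -- accumulation points near each 3i
  have key : ∀ i : Fin K, ∃ γ, γ ∈ accPtsL w ∧ |γ - 3 * (i:ℝ)| ≤ 1 := by
    intro i
    set φ : ℕ → ℕ := fun k => (i:ℕ) + K * k with hφdef
    have hφ : StrictMono φ := by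
      intro a b hab
      simp only [hφdef]
      have : K * a < K * b := Nat.mul_lt_mul_of_pos_left hab (by omega)
      omega
    have hmem : ∀ k, w (φ k) ∈ Metric.closedBall (3 * (i:ℝ)) 1 := by
      intro k
      have hmod : ((i:ℕ) + K * k) % K = (i:ℕ) := by
        rw [Nat.add_mul_mod_self_left, Nat.mod_eq_of_lt i.isLt]
      have : v (φ k) = 3 * (i:ℝ) := by
        simp only [hv, hφdef, hmod]
      have := hptw (φ k)
      rw [‹v (φ k) = 3 * (i:ℝ)›] at this
      simpa [Real.dist_eq] using this
    obtain ⟨γ, hγcl, ψ, hψ, hlim⟩ :=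
      tendsto_subseq_of_bounded (Metric.isBounded_closedBall (x := 3*(i:ℝ)) (r := 1))
        hmem
    refine ⟨γ, ⟨φ ∘ ψ, hφ.comp hψ, hlim⟩, ?_⟩
    have : γ ∈ Metric.closedBall (3*(i:ℝ)) 1 := by
      rwa [Metric.isClosed_closedBall.closure_eq] at hγcl
    simpa [Real.dist_eq] using this
  choose g hg habs using key
  have hginj : Function.Injective g := by
    intro i j hij
    by_contra hne
    have h1 : (1:ℝ) ≤ |(i:ℝ) - (j:ℝ)| := by
      have : (i:ℕ) ≠ (j:ℕ) := fun h => hne (Fin.ext h)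
      rcases Nat.lt_or_ge (i:ℕ) (j:ℕ) with h | h
      · have : ((i:ℕ):ℝ) + 1 ≤ ((j:ℕ):ℝ) := by exact_mod_cast h
        rw [abs_sub_comm, abs_of_nonneg (by linarith)]; linarith
      · have hlt : (j:ℕ) < (i:ℕ) := by omega
        have : ((j:ℕ):ℝ) + 1 ≤ ((i:ℕ):ℝ) := by exact_mod_cast hlt
        rw [abs_of_nonneg (by linarith)]; linarith
    have h2 := habs i
    have h3 := habs j
    rw [hij] at h2
    have := abs_sub_abs_le_abs_sub (g j - 3*(i:ℝ)) (g j - 3*(j:ℝ))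
    have h4 : |3*(i:ℝ) - 3*(j:ℝ)| ≤ 2 := by
      have := abs_sub (g j - 3*(i:ℝ)) (g j - 3*(j:ℝ))
      calc |3*(i:ℝ) - 3*(j:ℝ)| = |(g j - 3*(j:ℝ)) - (g j - 3*(i:ℝ))| := by ring_nf
        _ ≤ |g j - 3*(j:ℝ)| + |g j - 3*(i:ℝ)| := abs_sub _ _
        _ ≤ 2 := by linarith
    have h5 : |3*(i:ℝ) - 3*(j:ℝ)| = 3 * |(i:ℝ) - (j:ℝ)| := by
      rw [show 3*(i:ℝ) - 3*(j:ℝ) = 3 * ((i:ℝ) - (j:ℝ)) by ring, abs_mul]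
      norm_num
    rw [h5] at h4
    linarith
  have hsub : Set.range g ⊆ accPtsL w := by rintro γ ⟨i, rfl⟩; exact hg i
  calc N ≤ K := by omega
    _ = (Set.range g).ncard := by
        rw [← Set.image_univ, Set.ncard_image_of_injective _ hginj, Set.ncard_univ]
        simp
    _ ≤ (accPtsL w).ncard := Set.ncard_le_ncard hsub hfin


/-- a generic parameter t making p ↦ p.1 + t p.2 injective on a finite set -/
lemma exists_generic {P : Set (ℝ × ℝ)} (hP : P.Finite) :
    ∃ t : ℝ, t ≠ 0 ∧ Set.InjOn (fun p : ℝ × ℝ => p.1 + t * p.2) P := by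
  set T : Set ℝ := ⋃ p ∈ P, ⋃ q ∈ P, {t | p ≠ q ∧ p.1 + t * p.2 = q.1 + t * q.2} with hT
  have hTfin : T.Finite := by
    refine Set.Finite.biUnion hP fun p _ => Set.Finite.biUnion hP fun q _ => ?_
    apply Set.Subsingleton.finite
    intro t1 h1 t2 h2
    obtain ⟨hpq, e1⟩ := h1
    obtain ⟨-, e2⟩ := h2
    by_contra hne
    have h2ne : p.2 = q.2 := by
      by_contra h2ne
      have : (t1 - t2) * (p.2 - q.2) = 0 := by linarith
      rcases mul_eq_zero.mp this with h | h
      · exact hne (by linarith)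
      · exact h2ne (by linarith)
    have h1e : p.1 = q.1 := by
      have := e1
      rw [h2ne] at this
      linarith
    exact hpq (Prod.ext h1e h2ne)
  have : (T ∪ {0}).Finite := hTfin.union (Set.finite_singleton 0)
  obtain ⟨t, ht⟩ := this.infinite_compl.nonempty
  rw [Set.mem_compl_iff, Set.mem_union, not_or] at ht
  refine ⟨t, fun h => ht.2 (by simp [h]), ?_⟩
  intro p hp q hq hfe
  by_contra hne
  exact ht.1 (Set.mem_biUnion hp (Set.mem_biUnion hq ⟨hne, hfe⟩))



lemma key (A : Set ℕ) (M : Submodule ℝ Linf) (hdense : Dense (M : Set Linf))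
    (hM : ∀ z ∈ M, z ≠ 0 → (accPtsL z).Finite ∧ (accPtsL z).ncard ∈ A) (n : ℕ) :
    ∃ b, b ∈ A ∧ b + 1 ∈ A ∧ n ≤ b := by
  obtain ⟨z, hzM, hz0, hLfin, hLcard, hLge⟩ := exists_big A M hdense hM (n + 3)
  set L := accPtsL z with hLdef
  -- two distinct accumulation points of z
  have h2 : 1 < L.ncard := by omega
  obtain ⟨α₁, α₂, hα1, hα2, hne12⟩ := (Set.one_lt_ncard_iff hLfin).mp h2
  have hne21 : α₂ ≠ α₁ := hne12.symm
  -- minimal gap δ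
  set Dset := (fun p : ℝ × ℝ => |p.1 - p.2|) '' ((L ×ˢ L) ∩ {p | p.1 ≠ p.2}) with hDdef
  have hDfin : Dset.Finite := (((hLfin.prod hLfin).inter_of_left _).image _)
  have hDne : Dset.Nonempty := ⟨|α₁ - α₂|, ⟨(α₁, α₂), ⟨⟨hα1, hα2⟩, hne12⟩, rfl⟩⟩
  obtain ⟨δ, hδmem, hδmin⟩ := Set.exists_min_image Dset id hDfin hDne
  have hδpos : 0 < δ := by
    obtain ⟨p, ⟨-, hpne⟩, rfl⟩ := hδmem
    exact abs_pos.mpr (sub_ne_zero.mpr hpne)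
  have hδle : ∀ s r, s ∈ L → r ∈ L → s ≠ r → δ ≤ |s - r| := by
    intro s r hs hr hsr
    exact hδmin _ ⟨(s, r), ⟨⟨hs, hr⟩, hsr⟩, rfl⟩
  set Δ := α₂ - α₁ with hΔdef
  have hΔ : Δ ≠ 0 := sub_ne_zero.mpr hne21
  -- minimal ratio distance ρ
  set Rset := insert (1:ℝ) ((fun α => |(α - α₁)/Δ - 1|) '' (L ∩ {α | α ≠ α₁ ∧ α ≠ α₂})) with hRdef
  have hRfin : Rset.Finite := (Set.Finite.image _ (hLfin.inter_of_left _)).insert 1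
  obtain ⟨ρ, hρmem, hρmin⟩ := Set.exists_min_image Rset id hRfin ⟨1, Set.mem_insert 1 _⟩
  have hρpos : 0 < ρ := by
    rcases hρmem with h | ⟨α, ⟨hαL, hαne1, hαne2⟩, rfl⟩
    · rw [h]; norm_num
    · rw [abs_pos, sub_ne_zero]
      intro h
      have := (div_eq_one_iff_eq hΔ).mp h
      exact hαne2 (by rw [hΔdef] at this; linarith)
  have hρ1 : ρ ≤ 1 := hρmin 1 (Set.mem_insert 1 _)
  have hρle : ∀ α, α ∈ L → α ≠ α₁ → α ≠ α₂ → ρ ≤ |(α - α₁)/Δ - 1| := by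
    intro α hαL h1 h2
    exact hρmin _ (Set.mem_insert_of_mem _ ⟨α, ⟨hαL, h1, h2⟩, rfl⟩)
  -- choice of ε and η
  set ε := min (min (1/8) (δ / (8 * (|Δ| + 1)))) (ρ/8) with hεdef
  have hεpos : 0 < ε := by
    apply lt_min (lt_min (by norm_num) _) (by positivity)
    positivity
  have hε1 : ε ≤ 1/8 := le_trans (min_le_left _ _) (min_le_left _ _)
  have hε2 : ε ≤ δ / (8 * (|Δ| + 1)) := le_trans (min_le_left _ _) (min_le_right _ _)
  have hε3 : ε ≤ ρ/8 := min_le_right _ _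
  set η := δ/2 with hηdef
  have hηpos : 0 < η := by positivity
  -- the perturbation target u and the approximant w
  set u0 : ℕ → ℝ := fun m => if |z m - α₁| < η then 1 else 0 with hu0def
  have hu0b : ∀ m, |u0 m| ≤ 1 := by
    intro m; rw [hu0def]; dsimp only; split_ifs <;> norm_num
  set u : Linf := mkLinf u0 1 hu0b with hudef
  obtain ⟨w, hwM, hwu⟩ := dense_approx M hdense u hεpos
  have hpt : ∀ m, |w m - u0 m| ≤ ε := by
    intro m
    have h1 : |(w - u) m| ≤ ‖w - u‖ := linf_bound _ m
    have h2 : (w - u) m = w m - u0 m := by rw [lp.coeFn_sub]; simp [hudef]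
    rw [h2] at h1; linarith
  -- w is nonzero
  have hα1copy := hα1
  obtain ⟨φ₁, hφ₁, hlim₁⟩ := hα1copy
  have hev₁ : ∀ᶠ k in atTop, |z (φ₁ k) - α₁| < η := by
    have := Metric.tendsto_nhds.mp hlim₁ η hηpos
    simpa [Real.dist_eq] using this
  have hw0 : w ≠ 0 := by
    intro h
    obtain ⟨k, hk⟩ := hev₁.exists
    have h1 : u0 (φ₁ k) = 1 := if_pos hk
    have h2 := hpt (φ₁ k)
    rw [h, h1] at h2
    have : ((0 : Linf) (φ₁ k) : ℝ) = 0 := by rw [lp.coeFn_zero]; rfl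
    rw [this] at h2
    rw [abs_le] at h2
    linarith [h2.1]
  obtain ⟨hwfin, hwcard⟩ := hM w hwM hw0
  -- boundedness
  set C := max ‖z‖ ‖w‖ with hCdef
  have hzb : ∀ m, |z m| ≤ C := fun m => (linf_bound z m).trans (le_max_left _ _)
  have hwb : ∀ m, |w m| ≤ C := fun m => (linf_bound w m).trans (le_max_right _ _)
  -- the joint accumulation set
  set P := acc2 (fun m => z m) (fun m => w m) with hPdef
  have hPsub : P ⊆ L ×ˢ (accPtsL w) := fun p hp => ⟨acc2_fst hp, acc2_snd hp⟩
  have hPfin : P.Finite := Set.Finite.subset (hLfin.prod hwfin) hPsub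
  -- structure facts
  have hF2 : ∀ p ∈ P, |p.2| ≤ ε ∨ |p.2 - 1| ≤ ε := by
    intro p hp
    have hK : IsClosed ({q : ℝ × ℝ | |q.2| ≤ ε} ∪ {q : ℝ × ℝ | |q.2 - 1| ≤ ε}) := by
      exact (isClosed_le continuous_snd.abs continuous_const).union
        (isClosed_le (continuous_snd.sub continuous_const).abs continuous_const)
    have hmem : ∀ m, ((z m : ℝ), (w m : ℝ)) ∈
        ({q : ℝ × ℝ | |q.2| ≤ ε} ∪ {q : ℝ × ℝ | |q.2 - 1| ≤ ε}) := by
      intro m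
      have := hpt m
      rw [hu0def] at this
      by_cases h : |z m - α₁| < η
      · right; simpa [h] using this
      · left; simpa [h] using this
    exact acc2_subset_closed hK hmem hp
  have hF3 : ∀ p ∈ P, p.1 = α₁ ∨ |p.2| ≤ ε := by
    intro p hp
    have hK : IsClosed ({q : ℝ × ℝ | |q.1 - α₁| ≤ η} ∪ {q : ℝ × ℝ | |q.2| ≤ ε}) := by
      exact (isClosed_le (continuous_fst.sub continuous_const).abs continuous_const).union
        (isClosed_le continuous_snd.abs continuous_const)
    have hmem : ∀ m, ((z m : ℝ), (w m : ℝ)) ∈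
        ({q : ℝ × ℝ | |q.1 - α₁| ≤ η} ∪ {q : ℝ × ℝ | |q.2| ≤ ε}) := by
      intro m
      have := hpt m
      rw [hu0def] at this
      by_cases h : |z m - α₁| < η
      · left; exact le_of_lt h
      · right; simpa [h] using this
    rcases acc2_subset_closed hK hmem hp with h | h
    · left
      simp only [Set.mem_setOf_eq] at h
      by_contra hne
      have := hδle p.1 α₁ (hPsub hp).1 hα1 hne
      rw [hηdef] at h
      linarith
    · right; exact h
  -- existence of a partner of α₁ near 1
  have hF4 : ∃ βc, ((α₁ : ℝ), βc) ∈ P ∧ |βc - 1| ≤ ε := by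
    have hev' : ∀ᶠ k in atTop, |w (φ₁ k) - 1| ≤ ε := by
      refine hev₁.mono fun k hk => ?_
      have h1 : u0 (φ₁ k) = 1 := if_pos hk
      have := hpt (φ₁ k)
      rwa [h1] at this
    obtain ⟨p, ψ, hψ, hlim2, hpmem⟩ := exists_acc2_along hzb hwb φ₁ hφ₁
    have hp1 : p.1 = α₁ :=
      tendsto_nhds_unique (tendsto_pair hlim2).1 (hlim₁.comp hψ.tendsto_atTop)
    have hp2 : |p.2 - 1| ≤ ε := by
      have hev'' : ∀ᶠ k in atTop, |w (φ₁ (ψ k)) - 1| ≤ ε := hψ.tendsto_atTop.eventually hev'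
      have hcl : IsClosed {x : ℝ | |x - 1| ≤ ε} :=
        isClosed_le (continuous_id.sub continuous_const).abs continuous_const
      exact hcl.mem_of_tendsto (tendsto_pair hlim2).2 hev''
    refine ⟨p.2, ?_, hp2⟩
    have : ((α₁ : ℝ), p.2) = p := Prod.ext hp1.symm rfl
    rw [this]; exact hpmem
  obtain ⟨βc, hβcP, hβcnear⟩ := hF4
  -- partner of α₂
  obtain ⟨β₂, hβ₂P⟩ := exists_partner hzb hwb hα2
  have hβ₂near : |β₂| ≤ ε := by
    rcases hF3 (α₂, β₂) hβ₂P with h | h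
    · exact absurd h hne21
    · exact h
  -- B and C sets, min and max
  set Bset := {β : ℝ | ((α₂:ℝ), β) ∈ P ∧ |β| ≤ ε} with hBdef
  set Cset := {β : ℝ | ((α₁:ℝ), β) ∈ P ∧ |β - 1| ≤ ε} with hCdef2
  have hBfin : Bset.Finite := hwfin.subset (fun β hβ => acc2_snd hβ.1)
  have hCfin : Cset.Finite := hwfin.subset (fun β hβ => acc2_snd hβ.1)
  obtain ⟨b0, hb0mem, hb0min⟩ := Set.exists_min_image Bset id hBfin ⟨β₂, hβ₂P, hβ₂near⟩
  obtain ⟨c0, hc0mem, hc0max⟩ := Set.exists_max_image Cset id hCfin ⟨βc, hβcP, hβcnear⟩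
  have hb0abs := hb0mem.2
  have hc0abs := hc0mem.2
  rw [abs_le] at hb0abs hc0abs
  set d := c0 - b0 with hddef
  have hd1 : 1 - 2*ε ≤ d := by rw [hddef]; linarith [hb0abs.2, hc0abs.1]
  have hd2 : d ≤ 1 + 2*ε := by rw [hddef]; linarith [hb0abs.1, hc0abs.2]
  have hd34 : 3/4 ≤ d := by linarith
  have hdpos : 0 < d := by linarith
  have hdne : d ≠ 0 := ne_of_gt hdpos
  set ts := Δ / d with htsdef
  have htsne : ts ≠ 0 := div_ne_zero hΔ hdne
  have htscol : α₂ + ts * b0 = α₁ + ts * c0 := by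
    have h1 : ts * (c0 - b0) = Δ := by rw [htsdef, hddef]; field_simp; exact div_self hdne
    rw [hΔdef] at h1
    nlinarith [h1]
  have htabs : |ts| ≤ 2 * |Δ| := by
    have h1 : |ts| = |Δ| / d := by rw [htsdef, abs_div, abs_of_pos hdpos]
    rw [h1, div_le_iff₀ hdpos]
    nlinarith [abs_nonneg Δ]
  set pt₁ : ℝ × ℝ := (α₂, b0) with hpt1def
  set pt₂ : ℝ × ℝ := (α₁, c0) with hpt2def
  have hpt₁P : pt₁ ∈ P := hb0mem.1
  have hpt₂P : pt₂ ∈ P := hc0mem.1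
  have hptne : pt₁ ≠ pt₂ := by
    intro h
    exact hne21 (congrArg Prod.fst h)
  -- the mixed-orientation collision analysis
  have mixed : ∀ p ∈ P, ∀ q ∈ P, |p.2| ≤ ε → |q.2 - 1| ≤ ε →
      p.1 + ts * p.2 = q.1 + ts * q.2 → p.1 ≠ q.1 → p = pt₁ ∧ q = pt₂ := by
    intro p hp q hq hpnear hqnear heq hne1
    have hq1 : q.1 = α₁ := by
      rcases hF3 q hq with h | h
      · exact h
      · rw [abs_le] at h hqnear; linarith [h.2, hqnear.1]
    have hp1ne : p.1 ≠ α₁ := by rw [← hq1]; exact hne1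
    have hpL : p.1 ∈ L := (hPsub hp).1
    have e1 : ts * (q.2 - p.2) = p.1 - α₁ := by rw [← hq1]; linarith
    have e2 : Δ * (q.2 - p.2) = (p.1 - α₁) * d := by
      rw [← e1, htsdef]; field_simp
    by_cases hα2e : p.1 = α₂
    · -- exact collision with the extremal pair
      have hqp : q.2 - p.2 = d := by
        apply mul_left_cancel₀ hΔ
        rw [e2, hα2e, ← hΔdef]
      have hpB : p.2 ∈ Bset := by
        refine ⟨?_, hpnear⟩
        have : ((α₂:ℝ), p.2) = p := Prod.ext hα2e.symm rfl
        rw [this]; exact hp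
      have hqC : q.2 ∈ Cset := by
        refine ⟨?_, hqnear⟩
        have : ((α₁:ℝ), q.2) = q := Prod.ext hq1.symm rfl
        rw [this]; exact hq
      have h1 := hb0min p.2 hpB
      have h2 := hc0max q.2 hqC
      simp only [id] at h1 h2
      have hpb : p.2 = b0 := by rw [hddef] at hqp; linarith
      have hqc : q.2 = c0 := by rw [hddef] at hqp; linarith
      exact ⟨Prod.ext hα2e hpb, Prod.ext hq1 hqc⟩
    · -- impossible: ratio too close to 1
      exfalso
      have hρb := hρle p.1 hpL hp1ne hα2e
      have hr : (p.1 - α₁)/Δ = (q.2 - p.2)/d := by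
        rw [div_eq_div_iff hΔ hdne]; linarith [e2]
      rw [hr] at hρb
      have hre : (q.2 - p.2)/d - 1 = (q.2 - p.2 - d)/d := by field_simp
      rw [hre, abs_div, abs_of_pos hdpos] at hρb
      have hρd : ρ * d ≤ |q.2 - p.2 - d| := (le_div_iff₀ hdpos).mp hρb
      have hnum : |q.2 - p.2 - d| ≤ 4*ε := by
        rw [abs_le] at hpnear hqnear ⊢
        constructor <;> [skip; skip] <;> rw [hddef] <;>
          [linarith [hpnear.1, hpnear.2, hqnear.1, hqnear.2, hb0abs.1, hb0abs.2, hc0abs.1, hc0abs.2];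
           linarith [hpnear.1, hpnear.2, hqnear.1, hqnear.2, hb0abs.1, hb0abs.2, hc0abs.1, hc0abs.2]]
      nlinarith [mul_le_mul_of_nonneg_left hd34 (le_of_lt hρpos)]
  -- uniqueness of the collision at ts
  have huniq : ∀ p ∈ P, ∀ q ∈ P, p ≠ q → p.1 + ts * p.2 = q.1 + ts * q.2 →
      (p = pt₁ ∧ q = pt₂) ∨ (p = pt₂ ∧ q = pt₁) := by
    intro p hp q hq hpq heq
    have hne1 : p.1 ≠ q.1 := by
      intro h
      apply hpq
      have h2 : p.2 = q.2 := by
        have : ts * (p.2 - q.2) = 0 := by rw [h] at heq; linarith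
        rcases mul_eq_zero.mp this with hc | hc
        · exact absurd hc htsne
        · linarith
      exact Prod.ext h h2
    rcases hF2 p hp with hp2 | hp2 <;> rcases hF2 q hq with hq2 | hq2
    · -- both near 0 : impossible
      exfalso
      have hδa := hδle p.1 q.1 (hPsub hp).1 (hPsub hq).1 hne1
      have e1 : p.1 - q.1 = ts * (q.2 - p.2) := by linarith
      have e2 : |p.1 - q.1| = |ts| * |q.2 - p.2| := by rw [e1, abs_mul]
      have e3 : |q.2 - p.2| ≤ 2*ε := by
        rw [abs_le] at hp2 hq2 ⊢
        constructor <;> linarith [hp2.1, hp2.2, hq2.1, hq2.2]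
      have e4 : |p.1 - q.1| ≤ |ts| * (2*ε) :=
        e2.le.trans (mul_le_mul_of_nonneg_left e3 (abs_nonneg _))
      have e5 : |ts| * (2*ε) ≤ (2*|Δ|) * (2*ε) :=
        mul_le_mul_of_nonneg_right htabs (by positivity)
      have e6 : ε * (8 * (|Δ| + 1)) ≤ δ := by
        rw [← le_div_iff₀ (by positivity)]; exact hε2
      nlinarith [hεpos, abs_nonneg Δ]
    · exact Or.inl (mixed p hp q hq hp2 hq2 heq hne1)
    · obtain ⟨h1, h2⟩ := mixed q hq p hp hq2 hp2 heq.symm hne1.symm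
      exact Or.inr ⟨h2, h1⟩
    · exfalso
      apply hne1
      have h1 : p.1 = α₁ := by
        rcases hF3 p hp with h | h
        · exact h
        · rw [abs_le] at h hp2; linarith [h.2, hp2.1]
      have h2 : q.1 = α₁ := by
        rcases hF3 q hq with h | h
        · exact h
        · rw [abs_le] at h hq2; linarith [h.2, hq2.1]
      rw [h1, h2]
  -- image at the special parameter drops exactly one point
  have himg_eq : (fun p : ℝ × ℝ => p.1 + ts * p.2) '' P
      = (fun p : ℝ × ℝ => p.1 + ts * p.2) '' (P \ {pt₁}) := by
    apply subset_antisymm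
    · rintro γ ⟨p, hp, rfl⟩
      by_cases hppt : p = pt₁
      · refine ⟨pt₂, ⟨hpt₂P, fun h => hptne (Set.mem_singleton_iff.mp h).symm⟩, ?_⟩
        rw [hppt]
        show α₁ + ts * c0 = α₂ + ts * b0
        linarith [htscol]
      · exact ⟨p, ⟨hp, hppt⟩, rfl⟩
    · exact Set.image_mono Set.diff_subset
  have hinjQ : Set.InjOn (fun p : ℝ × ℝ => p.1 + ts * p.2) (P \ {pt₁}) := by
    intro p hp q hq hfe
    by_contra hnepq
    rcases huniq p hp.1 q hq.1 hnepq hfe with ⟨h1, -⟩ | ⟨-, h2⟩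
    · exact hp.2 (by rw [h1]; exact rfl)
    · exact hq.2 (by rw [h2]; exact rfl)
  have hcount1 : ((fun p : ℝ × ℝ => p.1 + ts * p.2) '' P).ncard = P.ncard - 1 := by
    rw [himg_eq, Set.ncard_image_of_injOn hinjQ,
      Set.ncard_diff_singleton_of_mem hpt₁P]
  -- P is big
  have hLsubfst : L ⊆ Prod.fst '' P := by
    intro α hα
    obtain ⟨β, hβ⟩ := exists_partner hzb hwb hα
    exact ⟨(α, β), hβ, rfl⟩
  have hPge : n + 3 ≤ P.ncard :=
    le_trans hLge (le_trans (Set.ncard_le_ncard hLsubfst (hPfin.image _))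
      (Set.ncard_image_le hPfin))
  -- generic parameter
  obtain ⟨t2, ht2ne, ht2inj⟩ := exists_generic hPfin
  have hcount2 : ((fun p : ℝ × ℝ => p.1 + t2 * p.2) '' P).ncard = P.ncard :=
    Set.ncard_image_of_injOn ht2inj
  -- accumulation points of the combinations
  have haccim : ∀ t : ℝ, accPtsL (z + t • w) = (fun p : ℝ × ℝ => p.1 + t * p.2) '' P := by
    intro t
    have hcoe : (fun m => ((z + t • w) m : ℝ)) = fun m => z m + t * w m := by
      funext m
      have h1 := lp.coeFn_add z (t • w)
      have h2 := lp.coeFn_smul t w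
      calc ((z + t • w) m : ℝ) = (⇑z + ⇑(t • w)) m := by rw [h1]
        _ = z m + (t • (w : ℕ → ℝ)) m := by rw [Pi.add_apply, h2]
        _ = z m + t * w m := by rw [Pi.smul_apply, smul_eq_mul]
    rw [accPtsL, hcoe]
    exact accPts_add_smul hzb hwb t
  have hmem1 : z + ts • w ∈ M := M.add_mem hzM (M.smul_mem _ hwM)
  have hmem2 : z + t2 • w ∈ M := M.add_mem hzM (M.smul_mem _ hwM)
  have himfin1 : ((fun p : ℝ × ℝ => p.1 + ts * p.2) '' P).Finite := hPfin.image _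
  have himfin2 : ((fun p : ℝ × ℝ => p.1 + t2 * p.2) '' P).Finite := hPfin.image _
  have hne1 : z + ts • w ≠ 0 := by
    have hgt : 1 < ((fun p : ℝ × ℝ => p.1 + ts * p.2) '' P).ncard := by
      rw [hcount1]; omega
    obtain ⟨γ1, γ2, hγ1, hγ2, hγne⟩ := (Set.one_lt_ncard_iff himfin1).mp hgt
    exact ne_zero_of_two_accPts (by rw [haccim ts]; exact hγ1)
      (by rw [haccim ts]; exact hγ2) hγne
  have hne2 : z + t2 • w ≠ 0 := by
    have hgt : 1 < ((fun p : ℝ × ℝ => p.1 + t2 * p.2) '' P).ncard := by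
      rw [hcount2]; omega
    obtain ⟨γ1, γ2, hγ1, hγ2, hγne⟩ := (Set.one_lt_ncard_iff himfin2).mp hgt
    exact ne_zero_of_two_accPts (by rw [haccim t2]; exact hγ1)
      (by rw [haccim t2]; exact hγ2) hγne
  have hA1 : P.ncard - 1 ∈ A := by
    have := (hM _ hmem1 hne1).2
    rwa [haccim ts, hcount1] at this
  have hA2 : P.ncard ∈ A := by
    have := (hM _ hmem2 hne2).2
    rwa [haccim t2, hcount2] at this
  refine ⟨P.ncard - 1, hA1, ?_, by omega⟩
  rw [show P.ncard - 1 + 1 = P.ncard by omega]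
  exact hA2

end SuccAux

theorem densely_lineable_implies_succ_infinite (A : Set ℕ) (hA : A ⊆ {n | 2 ≤ n})
    (M : Submodule ℝ Linf) (hdense : Dense (M : Set Linf)) (hinf : ¬ Module.Finite ℝ M)
    (hM : ∀ z ∈ M, z ≠ 0 → (accPtsL z).Finite ∧ (accPtsL z).ncard ∈ A) :
    {a ∈ A | a + 1 ∈ A}.Infinite := by
  by_contra hfin
  rw [Set.not_infinite] at hfin
  obtain ⟨m, hm⟩ := hfin.bddAbove
  obtain ⟨b, hbA, hb1A, hble⟩ := SuccAux.key A M hdense hM (m + 1)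
  have : b ≤ m := hm ⟨hbA, hb1A⟩
  omega
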